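/- Every finite differentiable O-sequence (h_0 = 1, h_1, …, h_e) of positive integers is a pure O-sequence. -/

import Mathlib

/-- The degree of a monomial, given by its exponent vector. -/
def monDeg {r : ℕ} (M : Fin r → ℕ) : ℕ := ∑ j, M j

/-- `X` is a (monomial) order ideal: a nonempty finite set of monomials (exponent vectors)
closed under divisibility. -/
def IsOrderIdeal {r : ℕ} (X : Finset (Fin r → ℕ)) : Prop :=
  X.Nonempty ∧ ∀ M ∈ X, ∀ N : Fin r → ℕ, (∀ j, N j ≤ M j) → N ∈ X

/-- `M` is a maximal monomial of `X` with respect to divisibility. -/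
def IsMaxMon {r : ℕ} (X : Finset (Fin r → ℕ)) (M : Fin r → ℕ) : Prop :=
  M ∈ X ∧ ∀ N ∈ X, (∀ j, M j ≤ N j) → N = M

/-- `X` is a pure order ideal with socle degree `e`: it is an order ideal whose maximal
degree is `e` and all of whose maximal monomials have degree `e`. -/
def IsPureWithSocle {r : ℕ} (X : Finset (Fin r → ℕ)) (e : ℕ) : Prop :=
  IsOrderIdeal X ∧ (∀ M ∈ X, monDeg M ≤ e) ∧ (∃ M ∈ X, monDeg M = e) ∧
    ∀ M, IsMaxMon X M → monDeg M = e

/-- `h` agrees in degrees `≤ e` with the h-vector of `X`. -/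
def HasHVector {r : ℕ} (X : Finset (Fin r → ℕ)) (h : ℕ → ℕ) (e : ℕ) : Prop :=
  ∀ i ≤ e, h i = (X.filter fun M => monDeg M = i).card

/-- `h` is (in degrees `≤ e`) a pure O-sequence of socle degree `e`. -/
def IsPureOSeq (h : ℕ → ℕ) (e : ℕ) : Prop :=
  ∃ (r : ℕ) (X : Finset (Fin r → ℕ)), IsPureWithSocle X e ∧ HasHVector X h e

/-- `h` is a pure O-sequence of socle degree `e` and type `t`. -/
def IsPureOSeqOfType (h : ℕ → ℕ) (e t : ℕ) : Prop :=
  ∃ (r : ℕ) (X : Finset (Fin r → ℕ)), IsPureWithSocle X e ∧ HasHVector X h e ∧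
    {M : Fin r → ℕ | IsMaxMon X M}.ncard = t

/-- `((n)_(d))_1^1`, computed from the `d`-binomial (Macaulay) expansion of `n`
obtained greedily; by convention `((0)_(d))_1^1 = 0`. -/
def macaulayBound : ℕ → ℕ → ℕ
  | 0, _ => 0
  | (n+1), d =>
      Nat.choose (Nat.findGreatest (fun k => Nat.choose k d ≤ n + 1) (n + 1 + d) + 1) (d + 1) +
        macaulayBound
          ((n + 1) - Nat.choose (Nat.findGreatest (fun k => Nat.choose k d ≤ n + 1) (n + 1 + d)) d)
          (d - 1)
  termination_by n d => n
  decreasing_by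
    have hd : d ≤ Nat.findGreatest (fun k => Nat.choose k d ≤ n + 1) (n + 1 + d) :=
      Nat.le_findGreatest (by omega) (by simp [Nat.choose_self])
    have hpos := Nat.choose_pos hd
    omega

/-- `g` satisfies Macaulay's bound (in degrees `1 ≤ i ≤ e - 1`). -/
def SatisfiesMacaulay (g : ℕ → ℕ) (e : ℕ) : Prop :=
  ∀ i, 1 ≤ i → i + 1 ≤ e → g (i + 1) ≤ macaulayBound (g i) i

/-- `h` is an O-sequence of socle degree `e`. -/
def IsOSeq (h : ℕ → ℕ) (e : ℕ) : Prop :=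
  h 0 = 1 ∧ (∀ i ≤ e, 0 < h i) ∧ SatisfiesMacaulay h e

/-- `h` is differentiable: its first difference `(1, h 1 - h 0, …, h e - h (e-1))`
consists of nonnegative integers and satisfies Macaulay's bound. -/
def IsDifferentiable (h : ℕ → ℕ) (e : ℕ) : Prop :=
  h 0 = 1 ∧ (∀ i, 1 ≤ i → i ≤ e → h (i - 1) ≤ h i) ∧
    SatisfiesMacaulay (fun i => if i = 0 then 1 else h i - h (i - 1)) e

namespace PureOSeq

/-- greedy top binomial index -/
def gk (n d : ℕ) : ℕ := Nat.findGreatest (fun k => Nat.choose k d ≤ n) (n + d)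


lemma le_choose {d : ℕ} (hd : 1 ≤ d) : ∀ {k : ℕ}, d ≤ k → k - d + 1 ≤ Nat.choose k d := by
  induction d with
  | zero => omega
  | succ d ih =>
    intro k hdk
    rcases Nat.eq_or_lt_of_le hd with h1 | h2
    · have : d = 0 := by omega
      subst this
      simp only [Nat.zero_add, zero_add, Nat.choose_one_right]
      omega
    · have hd' : 1 ≤ d := by omega
      have hk : 1 ≤ k := by omega
      have hdk' : d ≤ k - 1 := by omega
      have h0 := ih hd' hdk'
      have h3 : Nat.choose (k-1) d ≤ Nat.choose k (d+1) := by
        have hkk : k - 1 + 1 = k := by omega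
        calc Nat.choose (k-1) d ≤ Nat.choose (k-1) d + Nat.choose (k-1) (d+1) := Nat.le_add_right _ _
        _ = Nat.choose (k-1+1) (d+1) := (Nat.choose_succ_succ' (k-1) d).symm
        _ = Nat.choose k (d+1) := by rw [hkk]
      omega

lemma d_le_gk {n d : ℕ} (hn : 1 ≤ n) : d ≤ gk n d :=
  Nat.le_findGreatest (by omega) (by simpa [Nat.choose_self] using hn)

lemma gk_choose_le {n d : ℕ} (hn : 1 ≤ n) : Nat.choose (gk n d) d ≤ n := by
  unfold gk
  exact Nat.findGreatest_spec (P := fun k => Nat.choose k d ≤ n) (m := d) (by omega)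
    (by simpa [Nat.choose_self] using hn)

lemma lt_gk_succ_choose {n d : ℕ} (hd : 1 ≤ d) (hn : 1 ≤ n) : n < Nat.choose (gk n d + 1) d := by
  by_contra hcon
  push_neg at hcon
  have hbound : gk n d ≤ n + d := Nat.findGreatest_le _
  rcases Nat.lt_or_ge (gk n d) (n + d) with hlt | hge
  · exact Nat.findGreatest_is_greatest (Nat.lt_succ_self (gk n d)) (by omega) hcon
  · have heq : gk n d = n + d := by omega
    have h1 : Nat.choose (gk n d) d ≤ n := gk_choose_le hn
    have h2 := le_choose hd (show d ≤ gk n d by omega)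
    omega

lemma gk_eq_of {n d k : ℕ} (hd : 1 ≤ d) (hn : 1 ≤ n) (h1 : Nat.choose k d ≤ n)
    (h2 : n < Nat.choose (k+1) d) : gk n d = k := by
  have ha := gk_choose_le (d := d) hn
  have hb := lt_gk_succ_choose hd hn
  by_contra hne
  rcases Nat.lt_or_ge (gk n d) k with hlt | hge
  · have := Nat.choose_le_choose d (show gk n d + 1 ≤ k by omega); omega
  · have := Nat.choose_le_choose d (show k + 1 ≤ gk n d by omega); omega

lemma gk_one {n : ℕ} (hn : 1 ≤ n) : gk n 1 = n :=
  gk_eq_of le_rfl hn (by simp) (by simp)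

lemma macaulayBound_succ (n d : ℕ) :
    macaulayBound (n+1) d = Nat.choose (gk (n+1) d + 1) (d + 1) +
      macaulayBound ((n+1) - Nat.choose (gk (n+1) d) d) (d - 1) := by
  rw [macaulayBound]
  rfl

lemma macaulayBound_eq {n d : ℕ} (hn : 1 ≤ n) :
    macaulayBound n d = Nat.choose (gk n d + 1) (d + 1) +
      macaulayBound (n - Nat.choose (gk n d) d) (d - 1) := by
  obtain ⟨m, rfl⟩ := Nat.exists_eq_succ_of_ne_zero (show n ≠ 0 by omega)
  exact macaulayBound_succ m d

lemma choose_split {K d : ℕ} (hd : 1 ≤ d) :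
    Nat.choose (K+1) d = Nat.choose K (d-1) + Nat.choose K d := by
  have hd1 : d - 1 + 1 = d := by omega
  have h3 := Nat.choose_succ_succ' K (d-1)
  rw [hd1] at h3
  exact h3

lemma sub_lt_choose {n d : ℕ} (hd : 1 ≤ d) (hn : 1 ≤ n) :
    n - Nat.choose (gk n d) d < Nat.choose (gk n d) (d - 1) := by
  have h1 := gk_choose_le (d := d) hn
  have h2 := lt_gk_succ_choose hd hn
  have h3 := choose_split (K := gk n d) hd
  omega

lemma macaulayBound_zero (d : ℕ) : macaulayBound 0 d = 0 := by rw [macaulayBound]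

lemma macaulayBound_one (n : ℕ) : macaulayBound n 1 = Nat.choose (n+1) 2 := by
  rcases Nat.eq_zero_or_pos n with rfl | hn
  · simp [macaulayBound_zero]
  · rw [macaulayBound_eq hn, gk_one hn]
    simp [Nat.choose_one_right, macaulayBound_zero]

lemma gk_lt {n d k : ℕ} (hn : 1 ≤ n) (h : n < Nat.choose k d) : gk n d < k := by
  by_contra hcon
  push_neg at hcon
  have := Nat.choose_le_choose d hcon
  have := gk_choose_le (d := d) hn
  omega

lemma macaulayBound_lt {n d k : ℕ} (hd : 1 ≤ d) (h : n < Nat.choose k d) :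
    macaulayBound n d < Nat.choose (k+1) (d+1) := by
  induction n using Nat.strong_induction_on generalizing d k with
  | _ n ih =>
  rcases Nat.eq_zero_or_pos n with rfl | hn
  · rw [macaulayBound_zero]
    have hdk : d ≤ k := by
      by_contra hcon
      rw [Nat.choose_eq_zero_of_lt (by omega)] at h
      omega
    exact Nat.choose_pos (by omega)
  · have hk0 := gk_lt hn h
    have h1 := gk_choose_le (d := d) hn
    have hdle := d_le_gk (d := d) hn
    have hpos := Nat.choose_pos (n := gk n d) (k := d) hdle
    rw [macaulayBound_eq hn]
    rcases Nat.eq_or_lt_of_le hd with h1d | h2d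
    · -- d = 1
      subst h1d
      rw [gk_one hn]
      simp only [Nat.choose_one_right] at h ⊢
      rw [Nat.sub_self, macaulayBound_zero, Nat.add_zero]
      have e1 := Nat.choose_succ_succ' k 1
      simp only [Nat.choose_one_right] at e1
      have e2 := Nat.choose_le_choose (1+1) (show n + 1 ≤ k by omega)
      omega
    · have hsub := sub_lt_choose hd hn
      have hlt : n - Nat.choose (gk n d) d < n := by omega
      have ihres := ih _ hlt (show 1 ≤ d - 1 by omega) hsub
      rw [show d - 1 + 1 = d by omega] at ihres
      have e1 := Nat.choose_succ_succ' (gk n d + 1) d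
      have e2 := Nat.choose_le_choose (d+1) (show gk n d + 1 + 1 ≤ k + 1 by omega)
      omega

lemma macaulayBound_le {n d k : ℕ} (hd : 1 ≤ d) (h : n < Nat.choose k d) :
    macaulayBound n d ≤ Nat.choose k (d+1) + n := by
  induction n using Nat.strong_induction_on generalizing d k with
  | _ n ih =>
  rcases Nat.eq_zero_or_pos n with rfl | hn
  · rw [macaulayBound_zero]; omega
  · have hk0 := gk_lt hn h
    have h1 := gk_choose_le (d := d) hn
    have hdle := d_le_gk (d := d) hn
    have hpos := Nat.choose_pos (n := gk n d) (k := d) hdle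
    rw [macaulayBound_eq hn]
    rcases Nat.eq_or_lt_of_le hd with h1d | h2d
    · subst h1d
      rw [gk_one hn]
      simp only [Nat.choose_one_right] at h ⊢
      rw [Nat.sub_self, macaulayBound_zero, Nat.add_zero]
      have e2 := Nat.choose_le_choose (1+1) (show n + 1 ≤ k by omega)
      omega
    · have hsub := sub_lt_choose hd hn
      have hlt : n - Nat.choose (gk n d) d < n := by omega
      have ihres := ih _ hlt (show 1 ≤ d - 1 by omega) hsub
      rw [show d - 1 + 1 = d by omega] at ihres
      have e2 := Nat.choose_le_choose (d+1) (show gk n d + 1 ≤ k by omega)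
      omega

/-- all multisets of cardinality `d` with entries `< m` -/
def full (m d : ℕ) : Finset (Multiset ℕ) :=
  (Finset.univ : Finset (Sym (Fin m) d)).image (fun s => Multiset.map Fin.val s.1)

lemma mem_full {m d : ℕ} {t : Multiset ℕ} :
    t ∈ full m d ↔ Multiset.card t = d ∧ ∀ a ∈ t, a < m := by
  constructor
  · rintro ht
    simp only [full, Finset.mem_image] at ht
    obtain ⟨s, -, rfl⟩ := ht
    constructor
    · rw [Multiset.card_map, s.2]
    · intro a ha
      rw [Multiset.mem_map] at ha
      obtain ⟨b, -, rfl⟩ := ha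
      exact b.2
  · rintro ⟨hcard, hlt⟩
    simp only [full, Finset.mem_image]
    refine ⟨⟨Multiset.pmap (fun a h => (⟨a, h⟩ : Fin m)) t hlt, ?_⟩, Finset.mem_univ _, ?_⟩
    · simp [Multiset.card_pmap, hcard]
    · simp only [Multiset.map_pmap]
      exact (Multiset.pmap_eq_map _ id t hlt).trans (Multiset.map_id t)

lemma card_full (m d : ℕ) : (full m d).card = Nat.choose (m + d - 1) d := by
  rw [full, Finset.card_image_of_injective _ ?_, Finset.card_univ,
    Sym.card_sym_eq_choose, Fintype.card_fin]
  intro s t hst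
  apply Subtype.ext
  have : Function.Injective (Multiset.map (Fin.val : Fin m → ℕ)) :=
    Multiset.map_injective Fin.val_injective
  exact this hst

lemma full_mono {m m' : ℕ} (hm : m ≤ m') (d : ℕ) : full m d ⊆ full m' d := by
  intro t ht
  rw [mem_full] at ht ⊢
  exact ⟨ht.1, fun a ha => lt_of_lt_of_le (ht.2 a ha) hm⟩

/-- colex-initial segment of `n` monomials of degree `d` -/
def seg : ℕ → ℕ → Finset (Multiset ℕ)
  | 0, _ => ∅
  | _+1, 0 => {0}
  | n+1, d+1 =>
      full (gk (n+1) (d+1) - d) (d+1) ∪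
        (seg ((n+1) - Nat.choose (gk (n+1) (d+1)) (d+1)) d).image
          (fun s => (gk (n+1) (d+1) - d) ::ₘ s)
  termination_by n d => n
  decreasing_by
    have hd : d + 1 ≤ gk (n+1) (d+1) := d_le_gk (by omega)
    have hpos := Nat.choose_pos hd
    omega

lemma seg_zero (d : ℕ) : seg 0 d = ∅ := by rw [seg]

lemma seg_succ_zero (n : ℕ) : seg (n+1) 0 = {0} := by rw [seg]

lemma seg_succ_succ (n d : ℕ) : seg (n+1) (d+1) =
    full (gk (n+1) (d+1) - d) (d+1) ∪
      (seg ((n+1) - Nat.choose (gk (n+1) (d+1)) (d+1)) d).image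
        (fun s => (gk (n+1) (d+1) - d) ::ₘ s) := by
  rw [seg]

lemma seg_eq {n d : ℕ} (hn : 1 ≤ n) (hd : 1 ≤ d) : seg n d =
    full (gk n d + 1 - d) d ∪
      (seg (n - Nat.choose (gk n d) d) (d-1)).image
        (fun s => (gk n d + 1 - d) ::ₘ s) := by
  obtain ⟨m, rfl⟩ := Nat.exists_eq_succ_of_ne_zero (show n ≠ 0 by omega)
  obtain ⟨c, rfl⟩ := Nat.exists_eq_succ_of_ne_zero (show d ≠ 0 by omega)
  rw [seg_succ_succ]
  have : gk (m+1) (c+1) + 1 - (c+1) = gk (m+1) (c+1) - c := by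
    have := d_le_gk (n := m+1) (d := c+1) (by omega)
    omega
  rw [this]
  rfl

lemma card_of_mem_seg : ∀ {n d : ℕ} {s : Multiset ℕ}, s ∈ seg n d → Multiset.card s = d := by
  intro n
  induction n using Nat.strong_induction_on with
  | _ n ih =>
  intro d s hs
  rcases Nat.eq_zero_or_pos n with rfl | hn
  · rw [seg_zero] at hs; exact absurd hs (Finset.notMem_empty s)
  rcases Nat.eq_zero_or_pos d with rfl | hd
  · obtain ⟨m, rfl⟩ := Nat.exists_eq_succ_of_ne_zero (show n ≠ 0 by omega)
    rw [seg_succ_zero, Finset.mem_singleton] at hs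
    simp [hs]
  · rw [seg_eq hn hd, Finset.mem_union] at hs
    rcases hs with hs | hs
    · exact (mem_full.1 hs).1
    · rw [Finset.mem_image] at hs
      obtain ⟨y, hy, rfl⟩ := hs
      have hk := d_le_gk (n := n) (d := d) hn
      have hpos := Nat.choose_pos (n := gk n d) (k := d) hk
      have hlt : n - Nat.choose (gk n d) d < n := by
        have := gk_choose_le (d := d) hn; omega
      have := ih _ hlt hy
      rw [Multiset.card_cons, this]
      omega

lemma supp_of_mem_seg : ∀ {n d : ℕ} {s : Multiset ℕ} {a : ℕ}, 1 ≤ d → s ∈ seg n d →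
    a ∈ s → a ≤ gk n d + 1 - d := by
  intro n
  induction n using Nat.strong_induction_on with
  | _ n ih =>
  intro d s a hd hs ha
  rcases Nat.eq_zero_or_pos n with rfl | hn
  · rw [seg_zero] at hs; exact absurd hs (Finset.notMem_empty s)
  have hk := d_le_gk (n := n) (d := d) hn
  have hpos := Nat.choose_pos (n := gk n d) (k := d) hk
  have hchle := gk_choose_le (d := d) hn
  rw [seg_eq hn hd, Finset.mem_union] at hs
  rcases hs with hs | hs
  · have := (mem_full.1 hs).2 a ha
    omega
  · rw [Finset.mem_image] at hs
    obtain ⟨y, hy, rfl⟩ := hs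
    rw [Multiset.mem_cons] at ha
    rcases ha with rfl | ha
    · omega
    · -- a ∈ y, y ∈ seg n' (d-1)
      set n' := n - Nat.choose (gk n d) d with hn'
      have hn'pos : 1 ≤ n' := by
        by_contra hcon
        have : n' = 0 := by omega
        rw [this, seg_zero] at hy
        exact absurd hy (Finset.notMem_empty y)
      rcases Nat.eq_zero_or_pos (d - 1) with hd1 | hd1
      · -- d = 1 : seg n' 0 = {0}, y = 0, no elements
        rw [show d - 1 = 0 from hd1] at hy
        obtain ⟨m, hm⟩ := Nat.exists_eq_succ_of_ne_zero (show n' ≠ 0 by omega)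
        rw [hm, seg_succ_zero, Finset.mem_singleton] at hy
        subst hy
        exact absurd ha (Multiset.notMem_zero a)
      · have hsub := sub_lt_choose hd hn
        have hk'lt : gk n' (d-1) < gk n d := gk_lt hn'pos hsub
        have hk'ge := d_le_gk (n := n') (d := d - 1) hn'pos
        have hlt : n' < n := by omega
        have := ih _ hlt hd1 hy ha
        omega

lemma cons_inj (a : ℕ) : Function.Injective (fun s : Multiset ℕ => a ::ₘ s) :=
  fun _ _ hxy => (Multiset.cons_inj_right a).1 hxy

lemma card_seg : ∀ {n d : ℕ}, 1 ≤ d → (seg n d).card = n := by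
  intro n
  induction n using Nat.strong_induction_on with
  | _ n ih =>
  intro d hd
  rcases Nat.eq_zero_or_pos n with rfl | hn
  · rw [seg_zero]; rfl
  have hk := d_le_gk (n := n) (d := d) hn
  have hpos := Nat.choose_pos (n := gk n d) (k := d) hk
  have hchle := gk_choose_le (d := d) hn
  rw [seg_eq hn hd]
  rw [Finset.card_union_of_disjoint, card_full,
    Finset.card_image_of_injective _ (cons_inj (gk n d + 1 - d))]
  · have hfull : gk n d + 1 - d + d - 1 = gk n d := by omega
    rw [hfull]
    rcases Nat.eq_zero_or_pos (n - Nat.choose (gk n d) d) with h0 | hpos'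
    · rw [h0, seg_zero]
      simp only [Finset.card_empty]
      omega
    · have hd2 : 2 ≤ d := by
        by_contra hcon
        have hd1 : d = 1 := by omega
        subst hd1
        rw [gk_one hn, Nat.choose_one_right] at hpos'
        omega
      have hlt : n - Nat.choose (gk n d) d < n := by omega
      rw [ih _ hlt (show 1 ≤ d - 1 by omega)]
      omega
  · rw [Finset.disjoint_left]
    intro t htfull htimg
    rw [Finset.mem_image] at htimg
    obtain ⟨y, -, rfl⟩ := htimg
    have := (mem_full.1 htfull).2 _ (Multiset.mem_cons_self _ y)
    omega

lemma seg_subset_full {n d m : ℕ} (hd : 1 ≤ d) (hm : gk n d + 1 - d < m) :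
    seg n d ⊆ full m d := by
  intro s hs
  rcases Nat.eq_zero_or_pos n with rfl | hn
  · rw [seg_zero] at hs; exact absurd hs (Finset.notMem_empty s)
  rw [mem_full]
  exact ⟨card_of_mem_seg hs, fun a ha => lt_of_le_of_lt (supp_of_mem_seg hd hs ha) hm⟩

lemma seg_mono : ∀ {n' n d : ℕ}, 1 ≤ d → n ≤ n' → seg n d ⊆ seg n' d := by
  intro n'
  induction n' using Nat.strong_induction_on with
  | _ n' ih =>
  intro n d hd hnn
  rcases Nat.eq_zero_or_pos n with rfl | hn
  · rw [seg_zero]; exact Finset.empty_subset _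
  have hn' : 1 ≤ n' := le_trans hn hnn
  have hkk : gk n d ≤ gk n' d := by
    by_contra hcon
    push_neg at hcon
    have h1 := gk_choose_le (n := n) (d := d) hn
    have h2 := lt_gk_succ_choose (n := n') (d := d) hd hn'
    have h3 := Nat.choose_le_choose d (show gk n' d + 1 ≤ gk n d by omega)
    omega
  have hkd := d_le_gk (n := n) (d := d) hn
  have hk'd := d_le_gk (n := n') (d := d) hn'
  have hcle := gk_choose_le (n := n) (d := d) hn
  have hcpos := Nat.choose_pos (n := gk n d) (k := d) hkd
  rcases Nat.eq_or_lt_of_le hkk with heq | hlt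
  · rw [seg_eq hn hd, seg_eq hn' hd, ← heq]
    apply Finset.union_subset_union (le_refl _)
    apply Finset.image_subset_image
    rcases Nat.eq_zero_or_pos (n - Nat.choose (gk n d) d) with h0 | hsub
    · rw [h0, seg_zero]; exact Finset.empty_subset _
    · have hd2 : 2 ≤ d := by
        by_contra hcon
        have hd1 : d = 1 := by omega
        subst hd1
        rw [gk_one hn, Nat.choose_one_right] at hsub
        omega
      have hlt' : n' - Nat.choose (gk n d) d < n' := by omega
      exact ih _ hlt' (show 1 ≤ d - 1 by omega) (by omega)
  · calc seg n d ⊆ full (gk n' d + 1 - d) d := seg_subset_full hd (by omega)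
    _ ⊆ seg n' d := by rw [seg_eq hn' hd]; exact Finset.subset_union_left

lemma exists_cons_of_le_card {t s : Multiset ℕ} (h : t ≤ s)
    (hc : Multiset.card t + 1 = Multiset.card s) : ∃ a, s = a ::ₘ t := by
  have h1 : Multiset.card (s - t) = 1 := by rw [Multiset.card_sub h]; omega
  obtain ⟨a, ha⟩ := Multiset.card_eq_one.1 h1
  refine ⟨a, ?_⟩
  have h2 := tsub_add_cancel_of_le h
  rw [ha, Multiset.singleton_add] at h2
  exact h2.symm

lemma shadow_seg : ∀ {n m d : ℕ}, m ≤ macaulayBound n d →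
    ∀ s ∈ seg m (d+1), ∀ t, t ≤ s → Multiset.card t = d → t ∈ seg n d := by
  intro n
  induction n using Nat.strong_induction_on with
  | _ n ih =>
  intro m d hm s hs t hts hcard
  rcases Nat.eq_zero_or_pos m with rfl | hmpos
  · rw [seg_zero] at hs; exact absurd hs (Finset.notMem_empty s)
  have hnpos : 1 ≤ n := by
    by_contra hcon
    have : n = 0 := by omega
    rw [this, macaulayBound_zero] at hm
    omega
  rcases Nat.eq_zero_or_pos d with rfl | hd
  · -- t = 0 and seg n 0 = {0}
    have ht0 : t = 0 := Multiset.card_eq_zero.1 hcard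
    obtain ⟨p, rfl⟩ := Nat.exists_eq_succ_of_ne_zero (show n ≠ 0 by omega)
    rw [seg_succ_zero, Finset.mem_singleton, ht0]
  -- basic facts about gk n d
  have hkd := d_le_gk (n := n) (d := d) hnpos
  have hcle := gk_choose_le (n := n) (d := d) hnpos
  have hclt := lt_gk_succ_choose (n := n) (d := d) hd hnpos
  have hcpos := Nat.choose_pos (n := gk n d) (k := d) hkd
  have hmB := macaulayBound_eq (n := n) (d := d) hnpos
  have hsub := sub_lt_choose (n := n) (d := d) hd hnpos
  -- remainder bound
  have hrem : macaulayBound (n - Nat.choose (gk n d) d) (d-1) < Nat.choose (gk n d + 1) d := by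
    rcases Nat.eq_zero_or_pos (d - 1) with hd1 | hd1
    · have hd1' : d = 1 := by omega
      subst hd1'
      rw [gk_one hnpos, Nat.choose_one_right, Nat.sub_self, macaulayBound_zero]
      exact Nat.choose_pos (by omega)
    · have := macaulayBound_lt (n := n - Nat.choose (gk n d) d) (d := d - 1)
        (k := gk n d) hd1 hsub
      rw [show d - 1 + 1 = d by omega] at this
      exact this
  have hmd := d_le_gk (n := m) (d := d+1) hmpos
  have hmcle := gk_choose_le (n := m) (d := d+1) hmpos
  rcases Nat.lt_or_ge (gk m (d+1)) (gk n d + 1) with hcase | hcase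
  · -- small case: everything fits in full
    have hsupp : ∀ a ∈ t, a < gk n d + 1 - d := by
      intro a ha
      have has : a ∈ s := Multiset.mem_of_le hts ha
      have := supp_of_mem_seg (show 1 ≤ d + 1 by omega) hs has
      omega
    have : t ∈ full (gk n d + 1 - d) d := mem_full.2 ⟨hcard, hsupp⟩
    rw [seg_eq hnpos hd]
    exact Finset.mem_union_left _ this
  · -- gk m (d+1) = gk n d + 1
    have hub : m < Nat.choose (gk n d + 2) (d+1) := by
      have hcs := choose_split (K := gk n d + 1) (d := d + 1) (by omega)
      simp only [Nat.add_sub_cancel] at hcs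
      have e : gk n d + 1 + 1 = gk n d + 2 := rfl
      rw [e] at hcs
      omega
    have hk2lt : gk m (d+1) < gk n d + 2 := gk_lt hmpos hub
    have hk2 : gk m (d+1) = gk n d + 1 := by omega
    have hchoosele : Nat.choose (gk n d + 1) (d+1) ≤ m := by
      rw [← hk2]; exact hmcle
    have hm' : m - Nat.choose (gk n d + 1) (d+1) ≤ macaulayBound (n - Nat.choose (gk n d) d) (d-1) := by
      omega
    -- unfold seg m (d+1)
    rw [seg_eq hmpos (show 1 ≤ d + 1 by omega)] at hs
    rw [hk2] at hs
    have hmtop : gk n d + 1 + 1 - (d+1) = gk n d + 1 - d := by omega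
    rw [hmtop] at hs
    rw [Finset.mem_union] at hs
    rw [seg_eq hnpos hd]
    rcases hs with hs | hs
    · -- s in full (gk n d + 1 - d) (d+1): all entries < gk n d + 1 - d
      have hsupp : ∀ a ∈ t, a < gk n d + 1 - d := by
        intro a ha
        exact (mem_full.1 hs).2 a (Multiset.mem_of_le hts ha)
      exact Finset.mem_union_left _ (mem_full.2 ⟨hcard, hsupp⟩)
    · rw [Finset.mem_image] at hs
      obtain ⟨y, hy, rfl⟩ := hs
      have hycard : Multiset.card y = d := card_of_mem_seg hy
      have hscard : Multiset.card t + 1 = Multiset.card ((gk n d + 1 - d) ::ₘ y) := by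
        rw [Multiset.card_cons]; omega
      obtain ⟨a, hacons⟩ := exists_cons_of_le_card hts hscard
      rw [Multiset.cons_eq_cons] at hacons
      rcases hacons with ⟨-, rfl⟩ | ⟨hne, cs, hycs, htcs⟩
      · -- t = y
        have hm'n : m - Nat.choose (gk n d + 1) (d+1) ≤ n := by
          rcases Nat.eq_zero_or_pos (d-1) with hd1 | hd1
          · have hd1' : d = 1 := by omega
            rw [hd1'] at hm' ⊢
            rw [gk_one hnpos] at hm' ⊢
            rw [Nat.choose_one_right, Nat.sub_self, macaulayBound_zero] at hm'
            omega
          · have hL3 := macaulayBound_le (n := n - Nat.choose (gk n d) d) (d := d-1)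
              (k := gk n d) hd1 hsub
            rw [show d - 1 + 1 = d by omega] at hL3
            omega
        rw [← seg_eq hnpos hd]
        exact seg_mono hd hm'n hy
      · -- t = top ::ₘ cs with cs in shadow of y
        have hcs_le : cs ≤ y := by rw [hycs]; exact Multiset.le_cons_self cs a
        have hcscard : Multiset.card cs = d - 1 := by
          rw [htcs, Multiset.card_cons] at hcard
          omega
        have hnlt : n - Nat.choose (gk n d) d < n := by omega
        have hcsin : cs ∈ seg (n - Nat.choose (gk n d) d) (d-1) := by
          have hdd : d - 1 + 1 = d := by omega
          apply ih _ hnlt hm' y ?_ cs hcs_le hcscard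
          rw [hdd]
          exact hy
        apply Finset.mem_union_right
        rw [Finset.mem_image]
        exact ⟨cs, hcsin, htcs.symm⟩

section Cone

variable (g : ℕ → ℕ) (v e : ℕ)

/-- One-step shadow for the family of segments. -/
lemma Ystep (hg0 : g 0 = 1)
    (hmac : ∀ i, 1 ≤ i → i + 1 ≤ e → g (i+1) ≤ macaulayBound (g i) i)
    {j : ℕ} (hj1 : 1 ≤ j) (hje : j ≤ e) {y : Multiset ℕ} (hy : y ∈ seg (g j) j)
    {w : Multiset ℕ} (hw : w ≤ y) (hwc : Multiset.card w = j - 1) :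
    w ∈ seg (g (j-1)) (j-1) := by
  rcases Nat.eq_or_lt_of_le hj1 with hj | hj
  · -- j = 1
    rw [← hj] at hwc ⊢
    have : w = 0 := Multiset.card_eq_zero.1 (by omega)
    rw [this]
    simp only [Nat.sub_self, hg0, seg_succ_zero, Finset.mem_singleton]
  · have h2 : 2 ≤ j := hj
    have hm := hmac (j-1) (by omega) (by omega)
    rw [show j - 1 + 1 = j by omega] at hm
    apply shadow_seg hm y ?_ w hw hwc
    rw [show j - 1 + 1 = j by omega]
    exact hy

/-- Downward closure for the family of segments. -/
lemma Ydown (hg0 : g 0 = 1)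
    (hmac : ∀ i, 1 ≤ i → i + 1 ≤ e → g (i+1) ≤ macaulayBound (g i) i) :
    ∀ j, j ≤ e → ∀ y ∈ seg (g j) j, ∀ t ≤ y, t ∈ seg (g (Multiset.card t)) (Multiset.card t) := by
  intro j
  induction j with
  | zero =>
    intro _ y hy t ht
    have hyc : Multiset.card y = 0 := card_of_mem_seg hy
    have : Multiset.card t = 0 := by
      have := Multiset.card_le_card ht; omega
    rw [Multiset.card_eq_zero] at this
    subst this
    simp only [Multiset.card_zero]
    have : y = 0 := Multiset.card_eq_zero.1 hyc
    subst this
    simpa using hy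
  | succ j ihj =>
    intro hje y hy t ht
    have hyc : Multiset.card y = j + 1 := card_of_mem_seg hy
    have htc : Multiset.card t ≤ j + 1 := by have := Multiset.card_le_card ht; omega
    rcases Nat.eq_or_lt_of_le htc with heq | hlt
    · have : t = y := Multiset.eq_of_le_of_card_le ht (by omega)
      rw [this, hyc]
      exact hy
    · -- go through an intermediate one-step divisor
      have hne : y - t ≠ 0 := by
        intro hcon
        have := Multiset.card_sub ht
        rw [hcon] at this
        simp at this
        omega
      obtain ⟨a, ha⟩ := Multiset.exists_mem_of_ne_zero hne
      have hay : a ∈ y := Multiset.mem_of_le tsub_le_self ha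
      have hcount : Multiset.count a t < Multiset.count a y := by
        have h1 : 1 ≤ Multiset.count a (y - t) := Multiset.one_le_count_iff_mem.2 ha
        have h2 : Multiset.count a (y - t) = Multiset.count a y - Multiset.count a t :=
          Multiset.count_sub a y t
        have h3 := Multiset.count_le_of_le a ht
        omega
      have htw : t ≤ y.erase a := by
        rw [Multiset.le_iff_count]
        intro b
        rcases eq_or_ne b a with rfl | hba
        · rw [Multiset.count_erase_self]
          omega
        · rw [Multiset.count_erase_of_ne hba]
          exact Multiset.count_le_of_le b ht
      have hwc : Multiset.card (y.erase a) = j := by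
        rw [Multiset.card_erase_of_mem hay, hyc]
        rfl
      have hwseg : y.erase a ∈ seg (g j) j := by
        have := Ystep g e hg0 hmac (show 1 ≤ j + 1 by omega) hje hy
          (Multiset.erase_le a y) (by rw [hwc]; omega)
        simpa using this
      exact ihj (by omega) _ hwseg t htw

/-- entries of segment elements are bounded -/
lemma seg_entry_lt {n d a : ℕ} {s : Multiset ℕ} (hs : s ∈ seg n d) (ha : a ∈ s) (hn : n < v) :
    a < v := by
  rcases Nat.eq_zero_or_pos d with rfl | hd
  · rcases Nat.eq_zero_or_pos n with rfl | hn0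
    · rw [seg_zero] at hs; exact absurd hs (Finset.notMem_empty s)
    · obtain ⟨m, rfl⟩ := Nat.exists_eq_succ_of_ne_zero (show n ≠ 0 by omega)
      rw [seg_succ_zero, Finset.mem_singleton] at hs
      subst hs
      exact absurd ha (Multiset.notMem_zero a)
  rcases Nat.eq_zero_or_pos n with rfl | hn0
  · rw [seg_zero] at hs; exact absurd hs (Finset.notMem_empty s)
  have h1 := supp_of_mem_seg hd hs ha
  have h2 := d_le_gk (n := n) (d := d) hn0
  have h3 := le_choose hd h2
  have h4 := gk_choose_le (n := n) (d := d) hn0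
  omega

/-- the monomials of degree `i` of the cone -/
def coneZ (i : ℕ) : Finset (Multiset ℕ) :=
  (Finset.range (i+1)).biUnion
    (fun j => (seg (g j) j).image (fun s => Multiset.replicate (i - j) v + s))

/-- the cone order ideal -/
def coneX : Finset (Multiset ℕ) := (Finset.range (e+1)).biUnion (coneZ g v)

lemma mem_coneZ {i : ℕ} {s : Multiset ℕ} :
    s ∈ coneZ g v i ↔ ∃ j, j ≤ i ∧ ∃ y ∈ seg (g j) j, s = Multiset.replicate (i - j) v + y := by
  simp only [coneZ, Finset.mem_biUnion, Finset.mem_range, Finset.mem_image]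
  constructor
  · rintro ⟨j, hj, y, hy, rfl⟩
    exact ⟨j, by omega, y, hy, rfl⟩
  · rintro ⟨j, hj, y, hy, rfl⟩
    exact ⟨j, by omega, y, hy, rfl⟩

lemma card_of_mem_coneZ {i : ℕ} {s : Multiset ℕ} (hs : s ∈ coneZ g v i) :
    Multiset.card s = i := by
  rw [mem_coneZ] at hs
  obtain ⟨j, hj, y, hy, rfl⟩ := hs
  rw [Multiset.card_add, Multiset.card_replicate, card_of_mem_seg hy]
  omega

lemma count_v_eq {i j : ℕ} {y : Multiset ℕ} (hv : ∀ j' ≤ e, g j' < v) (hje : j ≤ e)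
    (hy : y ∈ seg (g j) j) :
    Multiset.count v (Multiset.replicate (i - j) v + y) = i - j := by
  rw [Multiset.count_add, Multiset.count_replicate, if_pos rfl,
    Multiset.count_eq_zero.2 (fun hmem => lt_irrefl v (seg_entry_lt v hy hmem (hv j hje)))]
  omega

lemma card_coneZ (hg0 : g 0 = 1) (hv : ∀ j' ≤ e, g j' < v) {i : ℕ} (hie : i ≤ e) :
    (coneZ g v i).card = ∑ j ∈ Finset.range (i+1), g j := by
  rw [coneZ, Finset.card_biUnion]
  · apply Finset.sum_congr rfl
    intro j hj
    rw [Finset.mem_range] at hj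
    rw [Finset.card_image_of_injective _ (add_right_injective _)]
    rcases Nat.eq_zero_or_pos j with rfl | hjpos
    · rw [hg0, seg_succ_zero]; simp [hg0]
    · exact card_seg hjpos
  · intro x hx y hxy hne
    rw [Finset.mem_coe, Finset.mem_range] at hx hxy
    rw [Function.onFun, Finset.disjoint_left]
    intro s hsx hsy
    rw [Finset.mem_image] at hsx hsy
    obtain ⟨y1, hy1, rfl⟩ := hsx
    obtain ⟨y2, hy2, heq⟩ := hsy
    have hc1 := count_v_eq g v e (i := i) hv (by omega) hy1
    have hc2 := count_v_eq g v e (i := i) hv (by omega) hy2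
    have hcard1 : Multiset.card y1 = x := card_of_mem_seg hy1
    have hcard2 : Multiset.card y2 = y := card_of_mem_seg hy2
    rw [heq] at hc2
    have hcards := congrArg Multiset.card heq
    rw [Multiset.card_add, Multiset.card_add, Multiset.card_replicate,
      Multiset.card_replicate, hcard1, hcard2] at hcards
    omega

lemma mem_coneX {s : Multiset ℕ} :
    s ∈ coneX g v e ↔ ∃ i, i ≤ e ∧ s ∈ coneZ g v i := by
  simp only [coneX, Finset.mem_biUnion, Finset.mem_range]
  constructor
  · rintro ⟨i, hi, hs⟩; exact ⟨i, by omega, hs⟩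
  · rintro ⟨i, hi, hs⟩; exact ⟨i, by omega, hs⟩

lemma coneX_filter_card {i : ℕ} (hie : i ≤ e) :
    (coneX g v e).filter (fun s => Multiset.card s = i) = coneZ g v i := by
  ext s
  rw [Finset.mem_filter, mem_coneX]
  constructor
  · rintro ⟨⟨i', hi', hs⟩, hcard⟩
    have := card_of_mem_coneZ g v hs
    have : i' = i := by omega
    subst this
    exact hs
  · intro hs
    exact ⟨⟨i, hie, hs⟩, card_of_mem_coneZ g v hs⟩

lemma multiset_decomp (t : Multiset ℕ) :
    t = Multiset.replicate (Multiset.count v t) v + Multiset.filter (· ≠ v) t := by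
  ext b
  rw [Multiset.count_add, Multiset.count_replicate, Multiset.count_filter]
  rcases eq_or_ne b v with rfl | hbv
  · simp
  · simp [hbv, Ne.symm hbv]

lemma coneX_down (hg0 : g 0 = 1)
    (hmac : ∀ i, 1 ≤ i → i + 1 ≤ e → g (i+1) ≤ macaulayBound (g i) i)
    (hv : ∀ j' ≤ e, g j' < v)
    {s t : Multiset ℕ} (hs : s ∈ coneX g v e) (hts : t ≤ s) : t ∈ coneX g v e := by
  rw [mem_coneX] at hs
  obtain ⟨i, hie, hs⟩ := hs
  rw [mem_coneZ] at hs
  obtain ⟨j, hji, y, hy, rfl⟩ := hs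
  have hycard : Multiset.card y = j := card_of_mem_seg hy
  set t' := Multiset.filter (· ≠ v) t with ht'def
  have ht'le : t' ≤ y := by
    rw [Multiset.le_iff_count]
    intro b
    rcases eq_or_ne b v with rfl | hbv
    · rw [ht'def, Multiset.count_filter]
      simp
    · have h1 : Multiset.count b t' = Multiset.count b t := by
        rw [ht'def, Multiset.count_filter, if_pos hbv]
      have h2 := Multiset.count_le_of_le b hts
      rw [Multiset.count_add, Multiset.count_replicate, if_neg (Ne.symm hbv)] at h2
      omega
  have ht'seg : t' ∈ seg (g (Multiset.card t')) (Multiset.card t') :=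
    Ydown g e hg0 hmac j (by omega) y hy t' ht'le
  have hdecomp := multiset_decomp v t
  have hcards : Multiset.count v t + Multiset.card t' = Multiset.card t := by
    conv_rhs => rw [hdecomp]
    rw [Multiset.card_add, Multiset.card_replicate]
  have htcard : Multiset.card t ≤ i := by
    have h1 := Multiset.card_le_card hts
    rw [Multiset.card_add, Multiset.card_replicate, hycard] at h1
    omega
  rw [mem_coneX]
  refine ⟨Multiset.card t, by omega, ?_⟩
  rw [mem_coneZ]
  refine ⟨Multiset.card t', by omega, t', ht'seg, ?_⟩
  rw [show Multiset.card t - Multiset.card t' = Multiset.count v t by omega]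
  exact hdecomp

lemma coneX_entry_le (hv : ∀ j' ≤ e, g j' < v) {s : Multiset ℕ} (hs : s ∈ coneX g v e)
    {a : ℕ} (ha : a ∈ s) : a ≤ v := by
  rw [mem_coneX] at hs
  obtain ⟨i, hie, hs⟩ := hs
  rw [mem_coneZ] at hs
  obtain ⟨j, hji, y, hy, rfl⟩ := hs
  rw [Multiset.mem_add] at ha
  rcases ha with ha | ha
  · have := Multiset.eq_of_mem_replicate ha; omega
  · have := seg_entry_lt v hy ha (hv j (by omega)); omega

lemma replicate_mem_coneZ (hg0 : g 0 = 1) (i : ℕ) :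
    Multiset.replicate i v ∈ coneZ g v i := by
  rw [mem_coneZ]
  refine ⟨0, by omega, 0, ?_, by simp⟩
  rw [hg0, seg_succ_zero]
  simp

lemma cons_v_mem_coneZ {i : ℕ} {s : Multiset ℕ} (hs : s ∈ coneZ g v i) :
    v ::ₘ s ∈ coneZ g v (i+1) := by
  rw [mem_coneZ] at hs ⊢
  obtain ⟨j, hji, y, hy, rfl⟩ := hs
  refine ⟨j, by omega, y, hy, ?_⟩
  rw [← Multiset.cons_add, ← Multiset.replicate_succ]
  rw [show i + 1 - j = (i - j) + 1 by omega]

section Convert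

variable (r : ℕ)

/-- exponent vector of a multiset -/
def toVec (s : Multiset ℕ) : Fin r → ℕ := fun j => s.count j.val

/-- multiset of an exponent vector -/
def toMs (N : Fin r → ℕ) : Multiset ℕ := ∑ j : Fin r, Multiset.replicate (N j) (j : ℕ)

lemma count_toMs (N : Fin r → ℕ) (a : ℕ) :
    Multiset.count a (toMs r N) = if h : a < r then N ⟨a, h⟩ else 0 := by
  rw [toMs, Multiset.count_sum']
  split
  · next h =>
    rw [Finset.sum_eq_single (⟨a, h⟩ : Fin r)]
    · rw [Multiset.count_replicate, if_pos rfl]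
    · intro b _ hb
      rw [Multiset.count_replicate, if_neg]
      intro hcon
      exact hb (Fin.ext hcon)
    · intro hcon
      exact absurd (Finset.mem_univ _) hcon
  · next h =>
    apply Finset.sum_eq_zero
    intro b _
    rw [Multiset.count_replicate, if_neg]
    intro hcon
    omega

lemma toVec_toMs (N : Fin r → ℕ) : toVec r (toMs r N) = N := by
  funext j
  rw [toVec, count_toMs, dif_pos j.2]

lemma toMs_toVec {s : Multiset ℕ} (hb : ∀ a ∈ s, a < r) : toMs r (toVec r s) = s := by
  ext a
  rw [count_toMs]
  split
  · rfl
  · next h =>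
    symm
    rw [Multiset.count_eq_zero]
    intro hcon
    exact h (hb a hcon)

lemma toVec_injOn {s t : Multiset ℕ} (hbs : ∀ a ∈ s, a < r) (hbt : ∀ a ∈ t, a < r)
    (h : toVec r s = toVec r t) : s = t := by
  rw [← toMs_toVec r hbs, ← toMs_toVec r hbt, h]

lemma monDeg_toVec {s : Multiset ℕ} (hb : ∀ a ∈ s, a < r) :
    monDeg (toVec r s) = Multiset.card s := by
  rw [monDeg]
  rw [show ∑ j : Fin r, toVec r s j = ∑ j : Fin r, (fun a => s.count a) (j : ℕ) from rfl]
  rw [Fin.sum_univ_eq_sum_range (fun a => s.count a) r]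
  rw [← Multiset.toFinset_sum_count_eq s]
  symm
  apply Finset.sum_subset
  · intro a ha
    rw [Multiset.mem_toFinset] at ha
    rw [Finset.mem_range]
    exact hb a ha
  · intro a _ ha
    rw [Multiset.mem_toFinset] at ha
    exact Multiset.count_eq_zero.2 ha

end Convert

end Cone

end PureOSeq

open PureOSeq in
/-- Every finite differentiable O-sequence `(h 0 = 1, h 1, …, h e)`
of positive integers is a pure O-sequence. -/
theorem differentiable_OSeq_is_pure (h : ℕ → ℕ) (e : ℕ)
    (hO : IsOSeq h e) (hdiff : IsDifferentiable h e) :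
    IsPureOSeq h e := by
  obtain ⟨hO0, hposall, -⟩ := hO
  obtain ⟨-, hmono, hmac⟩ := hdiff
  set g : ℕ → ℕ := fun i => if i = 0 then 1 else h i - h (i - 1) with hgdef
  have hg0 : g 0 = 1 := rfl
  have hmac' : ∀ i, 1 ≤ i → i + 1 ≤ e → g (i+1) ≤ macaulayBound (g i) i := hmac
  set S := ∑ i ∈ Finset.range (e+1), h i with hSdef
  set v := S + 1 with hvdef
  set r := S + 2 with hrdef
  have hgS : ∀ j, j ≤ e → g j < v := by
    intro j hj
    have h1 : h j ≤ S := Finset.single_le_sum (f := h) (fun i _ => Nat.zero_le (h i))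
      (Finset.mem_range.2 (by omega))
    have h2 : g j ≤ h j := by
      rw [hgdef]
      dsimp only
      split
      · next h0 => subst h0; omega
      · omega
    omega
  have hsum : ∀ i, i ≤ e → ∑ j ∈ Finset.range (i+1), g j = h i := by
    intro i hie
    induction i with
    | zero => simp [Finset.sum_range_one, hg0, hO0]
    | succ i ih =>
      rw [Finset.sum_range_succ, ih (by omega)]
      have hm := hmono (i+1) (by omega) hie
      simp only [Nat.add_sub_cancel] at hm
      have hg : g (i+1) = h (i+1) - h i := by
        rw [hgdef]
        simp
      omega
  have hent : ∀ s ∈ coneX g v e, ∀ a ∈ s, a < r := by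
    intro s hs a ha
    have := coneX_entry_le g v e hgS hs ha
    omega
  refine ⟨r, (coneX g v e).image (toVec r), ⟨⟨?_, ?_⟩, ?_, ?_, ?_⟩, ?_⟩
  · -- nonempty
    have h0mem : (0 : Multiset ℕ) ∈ coneX g v e := by
      rw [mem_coneX]
      exact ⟨0, Nat.zero_le e, by simpa using replicate_mem_coneZ g v hg0 0⟩
    exact ⟨toVec r 0, Finset.mem_image_of_mem _ h0mem⟩
  · -- downward closed
    intro M hM N hN
    rw [Finset.mem_image] at hM
    obtain ⟨s, hs, rfl⟩ := hM
    have hsub : toMs r N ≤ s := by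
      rw [Multiset.le_iff_count]
      intro a
      rw [count_toMs]
      split
      · next ha => exact hN ⟨a, ha⟩
      · exact Nat.zero_le _
    have htin := coneX_down g v e hg0 hmac' hgS hs hsub
    rw [Finset.mem_image]
    exact ⟨toMs r N, htin, toVec_toMs r N⟩
  · -- degree bound
    intro M hM
    rw [Finset.mem_image] at hM
    obtain ⟨s, hs, rfl⟩ := hM
    rw [monDeg_toVec r (hent s hs)]
    obtain ⟨i, hie, hsZ⟩ := (mem_coneX g v e).1 hs
    rw [card_of_mem_coneZ g v hsZ]
    exact hie
  · -- existence of degree e element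
    have hmem : Multiset.replicate e v ∈ coneX g v e := by
      rw [mem_coneX]
      exact ⟨e, le_rfl, replicate_mem_coneZ g v hg0 e⟩
    refine ⟨toVec r (Multiset.replicate e v), Finset.mem_image_of_mem _ hmem, ?_⟩
    rw [monDeg_toVec r (hent _ hmem), Multiset.card_replicate]
  · -- maximal monomials have degree e
    rintro M ⟨hM, hmax⟩
    rw [Finset.mem_image] at hM
    obtain ⟨s, hs, rfl⟩ := hM
    obtain ⟨i, hie, hsZ⟩ := (mem_coneX g v e).1 hs
    have hcard := card_of_mem_coneZ g v hsZ
    rw [monDeg_toVec r (hent s hs), hcard]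
    by_contra hne
    have hlt : i < e := by omega
    have hs'Z : v ::ₘ s ∈ coneZ g v (i+1) := cons_v_mem_coneZ g v hsZ
    have hs' : v ::ₘ s ∈ coneX g v e := (mem_coneX g v e).2 ⟨i+1, by omega, hs'Z⟩
    have hle : ∀ j, toVec r s j ≤ toVec r (v ::ₘ s) j := by
      intro j
      exact Multiset.count_le_of_le _ (Multiset.le_cons_self s v)
    have heq := hmax (toVec r (v ::ₘ s)) (Finset.mem_image_of_mem _ hs') hle
    have hseq : v ::ₘ s = s := toVec_injOn r (hent _ hs') (hent s hs) heq
    have := congrArg Multiset.card hseq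
    rw [Multiset.card_cons] at this
    omega
  · -- h-vector
    intro i hie
    rw [Finset.filter_image]
    rw [Finset.card_image_of_injOn (fun s hs t ht hst =>
      toVec_injOn r (hent s (Finset.mem_filter.1 hs).1) (hent t (Finset.mem_filter.1 ht).1) hst)]
    have hfe : (coneX g v e).filter (fun s => monDeg (toVec r s) = i)
        = coneZ g v i := by
      rw [← coneX_filter_card g v e hie]
      apply Finset.filter_congr
      intro s hs
      rw [monDeg_toVec r (hent s hs)]
    rw [hfe, card_coneZ g v e hg0 hgS hie, hsum i hie]
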